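/- Let (G, B, β, ω) be a twisted C*-dynamical system and E a Hilbert (G,B,β,ω)-module. If ξ ∈ E is square-integrable (i.e. Bra(ξ)ζ ∈ L²(G,B) for all ζ ∈ E), then Bra(ξ) : E → L²(G,B) is a bounded B-linear map. -/

import Mathlib

open MeasureTheory MultiplierAlgebra

/-- A (Busby–Smith) twisted C*-dynamical system `(G, B, β, ω)`: `β : G → Aut(B)` is strongly
measurable, `ω : G × G → U(M(B))` is strictly measurable, with `β₁ = id`, `ω(1,s) = ω(s,1) = 1`,
`β_s ∘ β_t = Ad(ω(s,t)) ∘ β_{st}` and `β_r(ω(s,t)) ω(r,st) = ω(r,s) ω(rs,t)`. -/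
structure TwistedSystem (G : Type*) [Group G] [TopologicalSpace G] [MeasurableSpace G]
    (B : Type*) [NonUnitalCStarAlgebra B] where
  β : G → B ≃⋆ₐ[ℂ] B
  ω : G → G → 𝓜(ℂ, B)
  ω_unitary : ∀ s t, ω s t ∈ unitary (𝓜(ℂ, B))
  β_strMeas : ∀ b : B, StronglyMeasurable fun s => β s b
  ω_strMeas_left : ∀ b : B, StronglyMeasurable fun p : G × G => (ω p.1 p.2).fst b
  ω_strMeas_right : ∀ b : B, StronglyMeasurable fun p : G × G => (ω p.1 p.2).snd b
  β_one : ∀ b, β 1 b = b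
  ω_one_left : ∀ s, ω 1 s = 1
  ω_one_right : ∀ s, ω s 1 = 1
  βM : G → 𝓜(ℂ, B) ≃⋆ₐ[ℂ] 𝓜(ℂ, B)
  βM_coe : ∀ (s : G) (b : B), βM s (b : 𝓜(ℂ, B)) = ((β s b : B) : 𝓜(ℂ, B))
  ad : ∀ (s t : G) (b : B),
    ((β s (β t b) : B) : 𝓜(ℂ, B)) = ω s t * ((β (s * t) b : B) : 𝓜(ℂ, B)) * star (ω s t)
  cocycle : ∀ r s t : G, βM r (ω s t) * ω r (s * t) = ω r s * ω (r * s) t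

/-- The twisted left regular action `Γ` on `B`-valued functions:
`(Γ_s φ)(x) = ω(s, s⁻¹x)* · β_s(φ(s⁻¹x))`. -/
noncomputable def twistedGamma {G : Type*} [Group G] [TopologicalSpace G] [MeasurableSpace G]
    {B : Type*} [NonUnitalCStarAlgebra B]
    (T : TwistedSystem G B) (s : G) (φ : G → B) : G → B :=
  fun x => (star (T.ω s (s⁻¹ * x))).fst (T.β s (φ (s⁻¹ * x)))

open scoped RightActions

/-- The Hilbert C⋆-module class as it stood in Mathlib (December 2024): a right `A`-module
(through `SMul Aᵐᵒᵖ E`) with an `A`-valued inner product, `A`-linear on the right. -/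
class CStarModuleOld (A E : Type*) [NonUnitalSemiring A] [StarRing A]
    [Module ℂ A] [AddCommGroup E] [Module ℂ E] [PartialOrder A] [SMul Aᵐᵒᵖ E] [Norm A] [Norm E]
    extends Inner A E where
  inner_add_right {x} {y} {z} : inner x (y + z) = inner x y + inner x z
  inner_self_nonneg {x} : 0 ≤ inner x x
  inner_self {x} : inner x x = 0 ↔ x = 0
  inner_op_smul_right {a : A} {x y : E} : inner x (y <• a) = inner x y * a
  inner_smul_right_complex {z : ℂ} {x} {y} : inner x (z • y) = z • inner x y
  star_inner x y : star (inner x y) = inner y x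
  norm_eq_sqrt_norm_inner_self x : ‖x‖ = Real.sqrt ‖inner x x‖

/-- A Hilbert `(G,B,β,ω)`-module: a Hilbert C*-module `E` over `B` together with a strongly
measurable twisted action `γ` of `G` by isometric surjections satisfying
`γ_s(ζ·b) = γ_s(ζ)·β_s(b)`, `⟨γ_s ζ, γ_s η⟩ = β_s⟨ζ,η⟩` and `γ_r γ_s(ζ) = γ_{rs}(ζ)·ω(r,s)*`,
where the right action of `M(B)` on `E` is the canonical extension of the `B`-action. -/
structure TwistedHilbertModule {G : Type*} [Group G] [TopologicalSpace G] [MeasurableSpace G]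
    {B : Type*} [NonUnitalCStarAlgebra B] [PartialOrder B] [StarOrderedRing B]
    (T : TwistedSystem G B)
    (E : Type*) [NormedAddCommGroup E] [NormedSpace ℂ E] [CompleteSpace E]
    [SMul Bᵐᵒᵖ E] [CStarModuleOld B E] where
  γ : G → E → E
  γ_isometry : ∀ s, Isometry (γ s)
  γ_surjective : ∀ s, Function.Surjective (γ s)
  γ_add : ∀ s (x y : E), γ s (x + y) = γ s x + γ s y
  γ_strMeas : ∀ x : E, StronglyMeasurable fun s => γ s x
  γ_one : ∀ x : E, γ 1 x = x
  /-- The canonical extension of the right `B`-action on `E` to `M(B)`. -/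
  smulM : 𝓜(ℂ, B) → E → E
  smulM_coe : ∀ (b : B) (x : E), smulM (b : 𝓜(ℂ, B)) x = x <• b
  inner_smulM : ∀ (m : 𝓜(ℂ, B)) (x y : E), (inner B x (smulM m y) : B) = m.snd (inner B x y)
  γ_smul : ∀ (s : G) (x : E) (b : B), γ s (x <• b) = γ s x <• T.β s b
  γ_inner : ∀ (s : G) (x y : E), (inner B (γ s x) (γ s y) : B) = T.β s (inner B x y)
  γ_twist : ∀ (r s : G) (x : E), γ r (γ s x) = smulM (star (T.ω r s)) (γ (r * s) x)

section OldCS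

variable {B : Type*} [NonUnitalCStarAlgebra B] [PartialOrder B] [StarOrderedRing B]
  {E : Type*} [NormedAddCommGroup E] [NormedSpace ℂ E] [SMul Bᵐᵒᵖ E] [CStarModuleOld B E]

/-- The inner product as an additive map in its second argument. -/
def oldInnerAdd (x : E) : E →+ B :=
  AddMonoidHom.mk' (fun y => (inner B x y : B)) (fun _ _ => CStarModuleOld.inner_add_right)

lemma oldInner_sub_right (x y z : E) :
    (inner B x (y - z) : B) = inner B x y - inner B x z :=
  map_sub (oldInnerAdd (B := B) x) y z

lemma oldInner_sub_left (x y z : E) :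
    (inner B (x - y) z : B) = inner B x z - inner B y z := by
  rw [← CStarModuleOld.star_inner z, oldInner_sub_right, star_sub,
    CStarModuleOld.star_inner, CStarModuleOld.star_inner]

lemma oldInner_zero_left (y : E) : (inner B (0 : E) y : B) = 0 := by
  rw [← CStarModuleOld.star_inner y]
  show star ((oldInnerAdd (B := B) y) 0) = 0
  rw [map_zero, star_zero]

lemma oldInner_op_smul_left (a : B) (x y : E) :
    (inner B (x <• a) y : B) = star a * inner B x y := by
  rw [← CStarModuleOld.star_inner y, CStarModuleOld.inner_op_smul_right, star_mul,
    CStarModuleOld.star_inner]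

lemma oldInner_real_smul_right (t : ℝ) (x y : E) :
    (inner B x ((t : ℂ) • y) : B) = t • (inner B x y : B) := by
  rw [CStarModuleOld.inner_smul_right_complex, Complex.coe_smul]

lemma oldInner_real_smul_left (t : ℝ) (x y : E) :
    (inner B ((t : ℂ) • x) y : B) = t • (inner B x y : B) := by
  rw [← CStarModuleOld.star_inner y, oldInner_real_smul_right, star_smul, star_trivial,
    CStarModuleOld.star_inner]

lemma oldInner_self_norm (x : E) : ‖(inner B x x : B)‖ = ‖x‖ ^ 2 := by
  rw [CStarModuleOld.norm_eq_sqrt_norm_inner_self (A := B) x, Real.sq_sqrt (norm_nonneg _)]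

lemma oldInner_norm_le (x y : E) : ‖(inner B x y : B)‖ ≤ ‖x‖ * ‖y‖ := by
  rcases eq_or_ne x 0 with hx | hx
  · rw [hx, oldInner_zero_left, norm_zero, norm_zero, zero_mul]
  set a : B := inner B x y with ha
  set t : ℝ := ‖x‖ ^ 2 with ht
  have htpos : 0 < t := by positivity
  have hsa : star a = inner B y x := CStarModuleOld.star_inner x y
  have h0 : (0 : B) ≤ inner B (x <• a - (t : ℂ) • y) (x <• a - (t : ℂ) • y) :=
    CStarModuleOld.inner_self_nonneg
  rw [oldInner_sub_left, oldInner_sub_right, oldInner_sub_right, oldInner_op_smul_left,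
    oldInner_op_smul_left, CStarModuleOld.inner_op_smul_right, oldInner_real_smul_right,
    oldInner_real_smul_left, CStarModuleOld.inner_op_smul_right, oldInner_real_smul_left,
    oldInner_real_smul_right, ← ha, hsa] at h0
  have hconj : inner B y x * inner B x x * a ≤ t • (inner B y x * a) := by
    have := CStarAlgebra.star_left_conjugate_le_norm_smul (a := a) (b := (inner B x x : B))
      (CStarModuleOld.star_inner x x)
    rwa [hsa, oldInner_self_norm] at this
  have hle : (0 : B) ≤ t • (t • (inner B y y : B) - inner B y x * a) := by
    have h1 : (0 : B) ≤ t • (inner B y x * a) - t • (inner B y x * a)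
        - t • ((inner B y x : B) * a) + t • t • (inner B y y : B) := by
      rw [mul_smul_comm, ← mul_assoc] at h0
      have h2 := sub_le_sub_right (sub_le_sub_right hconj (t • (inner B y x * a)))
        (t • (inner B y x * a) - t • t • (inner B y y : B))
      exact h0.trans (h2.trans_eq (by abel))
    rw [smul_sub]
    convert h1 using 1
    abel
  have hP : inner B y x * a ≤ t • (inner B y y : B) := by
    have := smul_nonneg (inv_nonneg.mpr htpos.le) hle
    rw [smul_smul, inv_mul_cancel₀ htpos.ne', one_smul] at this
    exact sub_nonneg.mp this
  have hsq : ‖a‖ ^ 2 ≤ (‖x‖ * ‖y‖) ^ 2 := by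
    calc ‖a‖ ^ 2 = ‖star a * a‖ := by rw [CStarRing.norm_star_mul_self, pow_two]
      _ ≤ ‖t • (inner B y y : B)‖ := by
          refine CStarAlgebra.norm_le_norm_of_nonneg_of_le (star_mul_self_nonneg a) ?_
          rwa [hsa]
      _ = (‖x‖ * ‖y‖) ^ 2 := by
          rw [norm_smul, oldInner_self_norm, Real.norm_of_nonneg htpos.le, ht, mul_pow]
  exact (pow_le_pow_iff_left₀ (norm_nonneg _) (by positivity) two_ne_zero).mp hsq

lemma oldInner_continuous (x : E) : Continuous fun y : E => (inner B x y : B) :=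
  AddMonoidHomClass.continuous_of_bound (oldInnerAdd (B := B) x) ‖x‖
    (fun y => oldInner_norm_le x y)

end OldCS

/-- if `ξ` is square-integrable then `Bra(ξ) : E → L²(G,B)` is a bounded
`B`-linear (and additive, hence module-) map. -/
theorem bra_is_bounded_module_map
    {G : Type*} [TopologicalSpace G] [T2Space G] [LocallyCompactSpace G]
    [SecondCountableTopology G] [Group G] [IsTopologicalGroup G]
    [MeasurableSpace G] [BorelSpace G] (μ : Measure G) [μ.IsHaarMeasure]
    {B : Type*} [NonUnitalCStarAlgebra B] [PartialOrder B] [StarOrderedRing B]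
    [TopologicalSpace.SeparableSpace B]
    {E : Type*} [NormedAddCommGroup E] [NormedSpace ℂ E] [CompleteSpace E]
    [SMul Bᵐᵒᵖ E] [CStarModuleOld B E]
    (T : TwistedSystem G B) (M : TwistedHilbertModule T E) (ξ : E)
    (hsi : ∀ ζ : E, MemLp (fun x => (inner B (M.γ x ξ) ζ : B)) 2 μ) :
    (∀ ζ η : E, (fun x => (inner B (M.γ x ξ) (ζ + η) : B))
        = fun x => (inner B (M.γ x ξ) ζ : B) + (inner B (M.γ x ξ) η : B)) ∧
    (∀ (ζ : E) (b : B), (fun x => (inner B (M.γ x ξ) (ζ <• b) : B))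
        = fun x => (inner B (M.γ x ξ) ζ : B) * b) ∧
    ∃ C : ℝ, 0 ≤ C ∧ ∀ ζ : E,
      eLpNorm (fun x => (inner B (M.γ x ξ) ζ : B)) 2 μ ≤ ENNReal.ofReal (C * ‖ζ‖) := by
  haveI : Fact ((1 : ENNReal) ≤ 2) := ⟨one_le_two⟩
  have hadd : ∀ ζ η : E, (fun x => (inner B (M.γ x ξ) (ζ + η) : B))
      = fun x => (inner B (M.γ x ξ) ζ : B) + (inner B (M.γ x ξ) η : B) := by
    intro ζ η; funext x; exact CStarModuleOld.inner_add_right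
  have hmul : ∀ (ζ : E) (b : B), (fun x => (inner B (M.γ x ξ) (ζ <• b) : B))
      = fun x => (inner B (M.γ x ξ) ζ : B) * b := by
    intro ζ b; funext x; exact CStarModuleOld.inner_op_smul_right
  refine ⟨hadd, hmul, ?_⟩
  -- the linear map `Bra(ξ) : E →ₗ[ℂ] L²(G,B)`
  let L : E →ₗ[ℂ] Lp B 2 μ :=
    { toFun := fun ζ => (hsi ζ).toLp _
      map_add' := fun ζ η =>
        ((MemLp.toLp_eq_toLp_iff (hsi (ζ + η)) ((hsi ζ).add (hsi η))).mpr
            (Filter.Eventually.of_forall fun x => CStarModuleOld.inner_add_right)).trans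
          (MemLp.toLp_add (hsi ζ) (hsi η))
      map_smul' := fun c ζ =>
        ((MemLp.toLp_eq_toLp_iff (hsi (c • ζ)) ((hsi ζ).const_smul c)).mpr
            (Filter.Eventually.of_forall fun x => CStarModuleOld.inner_smul_right_complex)).trans
          (MemLp.toLp_const_smul c (hsi ζ)) }
  have hLcoe : ∀ ζ : E, ⇑(L ζ) =ᵐ[μ] fun x => (inner B (M.γ x ξ) ζ : B) :=
    fun ζ => MemLp.coeFn_toLp (hsi ζ)
  -- closed graph theorem
  have hcont : Continuous L := by
    refine L.continuous_of_seq_closed_graph ?_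
    intro u ζ f hu hLu
    -- L² convergence gives convergence in measure, hence an a.e.-convergent subsequence
    have h2 : Filter.Tendsto (fun n => eLpNorm (⇑(L (u n)) - ⇑f) 2 μ) Filter.atTop (nhds 0) :=
      (Lp.tendsto_Lp_iff_tendsto_eLpNorm' (fun n => L (u n)) f).mp hLu
    have hmeas : TendstoInMeasure μ (fun n => ⇑(L (u n))) Filter.atTop ⇑f :=
      tendstoInMeasure_of_tendsto_eLpNorm (by norm_num)
        (fun n => Lp.aestronglyMeasurable _) (Lp.aestronglyMeasurable _) h2
    obtain ⟨ns, hns, hae⟩ := hmeas.exists_seq_tendsto_ae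
    -- pointwise convergence of `Bra(ξ)(u (ns n))` to `Bra(ξ)ζ`
    have hpt : ∀ x : G, Filter.Tendsto (fun n => (inner B (M.γ x ξ) (u (ns n)) : B))
        Filter.atTop (nhds (inner B (M.γ x ξ) ζ : B)) := fun x =>
      ((oldInner_continuous (B := B) (M.γ x ξ)).tendsto ζ).comp
        (hu.comp hns.tendsto_atTop)
    -- hence `f = Bra(ξ)ζ` almost everywhere
    have hfeq : ⇑f =ᵐ[μ] fun x => (inner B (M.γ x ξ) ζ : B) := by
      have hall : ∀ᵐ x ∂μ, ∀ n : ℕ, (L (u n)) x = (inner B (M.γ x ξ) (u n) : B) :=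
        MeasureTheory.ae_all_iff.mpr fun n => hLcoe (u n)
      filter_upwards [hae, hall] with x hx hx'
      have : Filter.Tendsto (fun n => (L (u (ns n))) x) Filter.atTop
          (nhds (inner B (M.γ x ξ) ζ : B)) := by
        simpa only [hx' _] using hpt x
      exact tendsto_nhds_unique hx this
    have : f = (Lp.memLp f).toLp ⇑f := (Lp.toLp_coeFn f (Lp.memLp f)).symm
    rw [this]
    exact (MemLp.toLp_eq_toLp_iff (Lp.memLp f) (hsi ζ)).mpr hfeq
  -- conclude the bound from the operator norm
  let Lc : E →L[ℂ] Lp B 2 μ := ⟨L, hcont⟩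
  refine ⟨‖Lc‖, norm_nonneg _, fun ζ => ?_⟩
  have hnorm : ‖L ζ‖ = (eLpNorm (fun x => (inner B (M.γ x ξ) ζ : B)) 2 μ).toReal := by
    rw [Lp.norm_def, eLpNorm_congr_ae (hLcoe ζ)]
  refine (ENNReal.le_ofReal_iff_toReal_le (hsi ζ).eLpNorm_ne_top
    (mul_nonneg (norm_nonneg _) (norm_nonneg _))).mpr ?_
  rw [← hnorm]
  exact Lc.le_opNorm ζ
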